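/- Suppose the integer k ≥ 0 satisfies ν := k − n/2 + 1 > 0. Then the ratio of consecutive generation densities has a finite limit at the origin: γ_k(z) → (1/B)·(1 + n/(2ν)) as z → 0⁺. In particular this limit exceeds 1/B, so near the origin the rank distribution deviates upward from the self-similar exponential law. -/

import Mathlib

open Real MeasureTheory Set Filter Topology


lemma integrable_bound (lam a : ℝ) (hlam : 0 < lam) (ha : -1 < a) :
    IntegrableOn (fun s : ℝ => s ^ a * Real.exp (-lam * s)) (Ioi 0) := by
  have := integrableOn_rpow_mul_exp_neg_mul_rpow ha (zero_lt_one (α := ℝ)) hlam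
  refine this.congr_fun (fun s hs => ?_) measurableSet_Ioi
  simp only [Real.rpow_one]

lemma tendsto_int (lam : ℝ) (hlam : 0 < lam) (a : ℝ) (ha : -1 < a) :
    Tendsto (fun z : ℝ => ∫ s in Ioi (0:ℝ),
        s ^ a * Real.exp (-lam * s - z ^ 2 / (4 * lam * s)))
      (nhdsWithin 0 (Ioi 0)) (nhds ((1/lam) ^ (a+1) * Real.Gamma (a+1))) := by
  have hg := integrable_bound lam a hlam ha
  have hval : ∫ s in Ioi (0:ℝ), s ^ a * Real.exp (-lam * s)
      = (1/lam) ^ (a+1) * Real.Gamma (a+1) := by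
    rw [← integral_rpow_mul_exp_neg_mul_Ioi (by linarith : (0:ℝ) < a + 1) hlam]
    refine setIntegral_congr_fun measurableSet_Ioi (fun s hs => ?_)
    rw [add_sub_cancel_right, neg_mul]
  rw [← hval]
  refine MeasureTheory.tendsto_integral_filter_of_dominated_convergence
    (fun s => s ^ a * Real.exp (-lam * s)) ?_ ?_ hg ?_
  · filter_upwards with z
    refine (ContinuousOn.mul ?_ ?_).aestronglyMeasurable measurableSet_Ioi
    · exact fun s hs => (Real.continuousAt_rpow_const s a (Or.inl (ne_of_gt hs))).continuousWithinAt
    · refine (Real.continuous_exp.comp_continuousOn ?_)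
      refine ContinuousOn.sub (continuous_const.mul continuous_id).continuousOn ?_
      exact ContinuousOn.div continuousOn_const
        ((continuous_const.mul continuous_id).continuousOn)
        (fun s hs => by have : (0:ℝ) < s := hs; positivity)
  · filter_upwards [self_mem_nhdsWithin] with z (hz : z ∈ Ioi (0:ℝ))
    filter_upwards [ae_restrict_mem measurableSet_Ioi] with s hs
    have hs0 : (0:ℝ) < s := hs
    rw [Real.norm_eq_abs, abs_mul, abs_of_nonneg (Real.rpow_nonneg hs0.le a),
      abs_of_nonneg (Real.exp_pos _).le]
    have hnn : 0 ≤ z ^ 2 / (4 * lam * s) := by positivity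
    exact mul_le_mul_of_nonneg_left
      (Real.exp_le_exp.mpr (by linarith : -lam * s - z ^ 2 / (4 * lam * s) ≤ -lam * s))
      (Real.rpow_nonneg hs0.le a)
  · filter_upwards [ae_restrict_mem measurableSet_Ioi] with s hs
    have hs0 : (0:ℝ) < s := hs
    have hc : Continuous fun z : ℝ =>
        s ^ a * Real.exp (-lam * s - z ^ 2 / (4 * lam * s)) := by
      continuity
    have := hc.tendsto 0
    have h2 : ((0:ℝ)) ^ 2 / (4 * lam * s) = 0 := by norm_num
    rw [h2, sub_zero] at this
    exact this.mono_left nhdsWithin_le_nhds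

/-- The steady-state generation-`k` density in the normalized distance
`z = |x|√(λ/D)` from the origin:
`𝒜_k(z) = (μ(λB)^k/(k!(4πD)^{n/2})) ∫₀^∞ s^{k−n/2} exp(−λs − z²/(4λs)) ds`. -/
noncomputable def steadyDensity (n : ℕ) (lam D B mu : ℝ) (k : ℕ) (z : ℝ) : ℝ :=
  (mu * (lam * B) ^ k / ((Nat.factorial k : ℝ) * (4 * π * D) ^ ((n : ℝ) / 2))) *
    ∫ s in Set.Ioi (0:ℝ),
      s ^ ((k : ℝ) - (n : ℝ) / 2) * Real.exp (-lam * s - z ^ 2 / (4 * lam * s))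

/-- The consecutive-generation ratio `γ_k(z) = 𝒜_k(z)/𝒜_{k+1}(z)`. -/
noncomputable def genRatio (n : ℕ) (lam D B mu : ℝ) (k : ℕ) (z : ℝ) : ℝ :=
  steadyDensity n lam D B mu k z / steadyDensity n lam D B mu (k + 1) z

/-- Upward deviation near the origin: if `ν = k − n/2 + 1 > 0`, then
`γ_k(z) → (1/B)(1 + n/(2ν))` as `z → 0⁺`, and this limit exceeds `1/B`. -/
theorem genRatio_at_origin_finite
    (n : ℕ) (hn : 1 ≤ n) (lam D B mu : ℝ)
    (hlam : 0 < lam) (hD : 0 < D) (hB : 0 < B) (hmu : 0 < mu)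
    (k : ℕ) (hnu : 0 < (k : ℝ) - (n : ℝ) / 2 + 1) :
    Filter.Tendsto (genRatio n lam D B mu k) (nhdsWithin 0 (Set.Ioi 0))
      (nhds ((1 / B) * (1 + (n : ℝ) / (2 * ((k : ℝ) - (n : ℝ) / 2 + 1))))) ∧
    1 / B < (1 / B) * (1 + (n : ℝ) / (2 * ((k : ℝ) - (n : ℝ) / 2 + 1))) := by
  set a : ℝ := (k : ℝ) - (n : ℝ) / 2 with ha_def
  set ν : ℝ := a + 1 with hν_def
  have hν : 0 < ν := hnu
  constructor
  · -- the limit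
    have ha1 : -1 < a := by linarith
    have ha2 : -1 < a + 1 := by linarith
    have T1 := tendsto_int lam hlam a ha1
    have T2 := tendsto_int lam hlam (a + 1) ha2
    set C1 : ℝ := mu * (lam * B) ^ k / ((Nat.factorial k : ℝ) * (4 * π * D) ^ ((n : ℝ) / 2))
      with hC1
    set C2 : ℝ := mu * (lam * B) ^ (k+1) /
        ((Nat.factorial (k+1) : ℝ) * (4 * π * D) ^ ((n : ℝ) / 2)) with hC2
    have hP : (0:ℝ) < (4 * π * D) ^ ((n : ℝ) / 2) := by
      apply Real.rpow_pos_of_pos; positivity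
    have hC1pos : 0 < C1 := by
      apply div_pos (by positivity)
      exact mul_pos (by exact_mod_cast Nat.factorial_pos k) hP
    have hC2pos : 0 < C2 := by
      apply div_pos (by positivity)
      exact mul_pos (by exact_mod_cast Nat.factorial_pos (k+1)) hP
    have hL2pos : 0 < (1/lam) ^ (a + 1 + 1) * Real.Gamma (a + 1 + 1) := by
      apply mul_pos (Real.rpow_pos_of_pos (by positivity) _)
      exact Real.Gamma_pos_of_pos (by linarith)
    have hcast : ((k + 1 : ℕ) : ℝ) - (n : ℝ) / 2 = a + 1 := by push_cast [ha_def]; ring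
    have Tmain : Tendsto (genRatio n lam D B mu k) (nhdsWithin 0 (Set.Ioi 0))
        (nhds ((C1 * ((1/lam) ^ (a+1) * Real.Gamma (a+1))) /
          (C2 * ((1/lam) ^ (a+1+1) * Real.Gamma (a+1+1))))) := by
      have := (T1.const_mul C1).div (T2.const_mul C2) (by positivity)
      refine this.congr (fun z => ?_)
      simp only [genRatio, steadyDensity, hcast, ← hC1, ← hC2, ha_def, Pi.div_apply]
    have hval : (C1 * ((1/lam) ^ (a+1) * Real.Gamma (a+1))) /
          (C2 * ((1/lam) ^ (a+1+1) * Real.Gamma (a+1+1)))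
        = (1 / B) * (1 + (n : ℝ) / (2 * ν)) := by
      have hG : Real.Gamma (a + 1 + 1) = (a+1) * Real.Gamma (a+1) :=
        Real.Gamma_add_one (by linarith)
      have hr : (1/lam) ^ (a+1+1) = (1/lam) ^ (a+1) * (1/lam) :=
        Real.rpow_add_one (by positivity) _
      have hGpos : 0 < Real.Gamma (a+1) := Real.Gamma_pos_of_pos (by linarith)
      have hrpos : 0 < (1/lam:ℝ) ^ (a+1) := Real.rpow_pos_of_pos (by positivity) _
      rw [hG, hr, hC1, hC2, pow_succ, Nat.factorial_succ]
      have h2k : (n : ℝ) = 2 * (k:ℝ) + 2 - 2 * ν := by rw [hν_def, ha_def]; ring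
      rw [h2k]
      push_cast
      field_simp
      rw [← hν_def, mul_div_assoc, div_self hν.ne']; ring
    rw [← hval]; exact Tmain
  · have hnpos : (0:ℝ) < n := by exact_mod_cast hn
    have h1 : 0 < (n : ℝ) / (2 * ν) := by positivity
    have hBi : 0 < 1 / B := by positivity
    nlinarith
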